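/- Let α, β be nonzero rational numbers, neither equal to 1 or -1, and let p be an odd prime with v_p(α) = v_p(β) = 0. Suppose that v_p(α^{2k} - β) ≥ 1 for some integer k, and that the Legendre symbol (α|p) = -1. Then ord_p(β) < ord_p(α); in fact, ord_p(α)/ord_p(β) is a positive even integer. -/

import Mathlib

/-- The residue of a rational number `γ` in `𝔽_p = ZMod p` (for `p` prime). -/
noncomputable def ratResidue (p : ℕ) (γ : ℚ) : ZMod p :=
  if hp : p.Prime then
    haveI : Fact p.Prime := ⟨hp⟩
    (γ : ZMod p)
  else 0

/-- The Legendre symbol `(γ | p)` of the residue of a rational number `γ` modulo `p`. -/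
noncomputable def legendreRat (p : ℕ) (γ : ℚ) : ℤ :=
  if hp : p.Prime then
    haveI : Fact p.Prime := ⟨hp⟩
    quadraticChar (ZMod p) (ratResidue p γ)
  else 0

/-- A pair `α, β` of rational numbers is *special* if there are infinitely many odd primes `p`
with `v_p(α) = v_p(β) = 0`, Legendre symbol `(α|p) = -1`, and `v_p(α^{2k} - β) ≥ 1` for some
integer `k` (where `v_p(0) = ∞` counts as `≥ 1`). -/
def IsSpecialPair (α β : ℚ) : Prop :=
  {p : ℕ | p.Prime ∧ Odd p ∧ padicValRat p α = 0 ∧ padicValRat p β = 0 ∧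
    legendreRat p α = -1 ∧
    ∃ k : ℤ, α ^ (2 * k) - β = 0 ∨ 1 ≤ padicValRat p (α ^ (2 * k) - β)}.Infinite


/-- `ordRat p γ` is the multiplicative order of the residue of `γ` in `𝔽_p^×`. -/
noncomputable def ordRat (p : ℕ) (γ : ℚ) : ℕ := orderOf (ratResidue p γ)

/-- If `v_p(γ) = 0` then `p` divides neither numerator nor denominator of `γ`. -/
lemma not_dvd_num_den {p : ℕ} [hfp : Fact p.Prime] {γ : ℚ} (h0 : γ ≠ 0)
    (hv : padicValRat p γ = 0) : ¬ (p : ℤ) ∣ γ.num ∧ ¬ p ∣ γ.den := by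
  have hd0 : γ.den ≠ 0 := γ.den_nz
  have hn0 : γ.num ≠ 0 := Rat.num_ne_zero.mpr h0
  rw [padicValRat_def] at hv
  by_cases h1 : p ∣ γ.num.natAbs
  · by_cases h2 : p ∣ γ.den
    · exfalso
      have hd : p ∣ Nat.gcd γ.num.natAbs γ.den := Nat.dvd_gcd h1 h2
      rw [γ.reduced] at hd
      exact hfp.out.one_lt.ne' (Nat.dvd_one.mp hd)
    · exfalso
      have hz : padicValNat p γ.den = 0 := padicValNat.eq_zero_of_not_dvd h2
      have h1' : 1 ≤ padicValInt p γ.num := by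
        have := one_le_padicValNat_of_dvd
          (Int.natAbs_ne_zero.mpr hn0) h1
        simpa [padicValInt] using this
      omega
  · constructor
    · intro h; exact h1 (Int.natCast_dvd.mp h)
    · intro h2
      have hz : padicValInt p γ.num = 0 := by
        simpa [padicValInt] using padicValNat.eq_zero_of_not_dvd h1
      have h2' : 1 ≤ padicValNat p γ.den :=
        one_le_padicValNat_of_dvd hd0 h2
      omega

theorem stmt2 (α β : ℚ) (hα0 : α ≠ 0) (hβ0 : β ≠ 0) (hα1 : α ≠ 1) (hα1' : α ≠ -1)
    (hβ1 : β ≠ 1) (hβ1' : β ≠ -1) (p : ℕ) (hp : p.Prime) (hpodd : Odd p)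
    (hvα : padicValRat p α = 0) (hvβ : padicValRat p β = 0)
    (hk : ∃ k : ℤ, α ^ (2 * k) - β = 0 ∨ 1 ≤ padicValRat p (α ^ (2 * k) - β))
    (hleg : legendreRat p α = -1) :
    ordRat p β < ordRat p α ∧
      ∃ m : ℕ, 0 < m ∧ Even m ∧ ordRat p α = m * ordRat p β := by
  haveI : Fact p.Prime := ⟨hp⟩
  obtain ⟨k, hkk⟩ := hk
  obtain ⟨hxn, hyn⟩ := not_dvd_num_den hα0 hvα
  obtain ⟨hun, hwn⟩ := not_dvd_num_den hβ0 hvβ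
  set x : ℤ := α.num with hxdef
  set y : ℕ := α.den with hydef
  set u : ℤ := β.num with hudef
  set w : ℕ := β.den with hwdef
  have hpZ : Prime (p : ℤ) := Nat.prime_iff_prime_int.mp hp
  -- residues of numerators and denominators are nonzero
  have hy0 : (y : ZMod p) ≠ 0 := fun h => hyn ((ZMod.natCast_eq_zero_iff _ _).mp h)
  have hw0 : (w : ZMod p) ≠ 0 := fun h => hwn ((ZMod.natCast_eq_zero_iff _ _).mp h)
  have hx0 : ((x : ℤ) : ZMod p) ≠ 0 := fun h => hxn ((ZMod.intCast_zmod_eq_zero_iff_dvd _ _).mp h)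
  have hu0 : ((u : ℤ) : ZMod p) ≠ 0 := fun h => hun ((ZMod.intCast_zmod_eq_zero_iff_dvd _ _).mp h)
  -- natural number exponents
  set m : ℕ := (2 * k).toNat with hmdef
  set n : ℕ := (-(2 * k)).toNat with hndef
  have hmn : (m : ℤ) - n = 2 * k := by omega
  -- the auxiliary rational
  set η : ℚ := α ^ m - β * α ^ n with hηdef
  have hyQ : (y : ℚ) ≠ 0 := Nat.cast_ne_zero.mpr α.den_nz
  have hwQ : (w : ℚ) ≠ 0 := Nat.cast_ne_zero.mpr β.den_nz
  have hαxy : α = (x : ℚ) / (y : ℚ) := by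
    rw [hxdef, hydef]; exact (Rat.num_div_den α).symm
  have hβuw : β = (u : ℚ) / (w : ℚ) := by
    rw [hudef, hwdef]; exact (Rat.num_div_den β).symm
  have key : η * ((y : ℚ) ^ (m + n) * (w : ℚ)) =
      (x : ℚ) ^ m * (w : ℚ) * (y : ℚ) ^ n - (u : ℚ) * (x : ℚ) ^ n * (y : ℚ) ^ m := by
    rw [hηdef, hαxy, hβuw, div_pow, div_pow, pow_add]
    field_simp
  have hden : (η.den : ℚ) ≠ 0 := Nat.cast_ne_zero.mpr η.den_nz
  have h1 : (η.num : ℚ) = η * (η.den : ℚ) := by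
    nth_rewrite 2 [← Rat.num_div_den η]
    rw [div_mul_cancel₀ _ hden]
  have hZQ : (η.num : ℚ) * ((y : ℚ) ^ (m + n) * (w : ℚ)) =
      ((x : ℚ) ^ m * (w : ℚ) * (y : ℚ) ^ n - (u : ℚ) * (x : ℚ) ^ n * (y : ℚ) ^ m) *
        (η.den : ℚ) := by
    linear_combination ((y : ℚ) ^ (m + n) * (w : ℚ)) * h1 + (η.den : ℚ) * key
  have hZ : η.num * ((y : ℤ) ^ (m + n) * (w : ℤ)) =
      ((x : ℤ) ^ m * (w : ℤ) * (y : ℤ) ^ n - u * (x : ℤ) ^ n * (y : ℤ) ^ m) * (η.den : ℤ) := by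
    exact_mod_cast hZQ
  -- the denominator of η is prime to p
  have hDQ : ((y : ℚ) ^ (m + n) * (w : ℚ)) ≠ 0 := mul_ne_zero (pow_ne_zero _ hyQ) hwQ
  have hηD : η = (((x : ℤ) ^ m * (w : ℤ) * (y : ℤ) ^ n - u * (x : ℤ) ^ n * (y : ℤ) ^ m : ℤ) : ℚ) /
      (((y : ℤ) ^ (m + n) * (w : ℤ) : ℤ) : ℚ) := by
    rw [eq_div_iff (by exact_mod_cast hDQ)]
    push_cast
    exact key
  have hηdvd : (η.den : ℤ) ∣ (y : ℤ) ^ (m + n) * (w : ℤ) := by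
    have : η = Rat.divInt ((x : ℤ) ^ m * (w : ℤ) * (y : ℤ) ^ n - u * (x : ℤ) ^ n * (y : ℤ) ^ m)
        ((y : ℤ) ^ (m + n) * (w : ℤ)) := by
      rw [Rat.divInt_eq_div]; exact hηD
    rw [this]
    exact Rat.den_dvd _ _
  have hηden : ¬ (p : ℤ) ∣ (η.den : ℤ) := by
    intro h
    rcases hpZ.dvd_mul.mp (h.trans hηdvd) with h' | h'
    · exact hyn (Int.natCast_dvd_natCast.mp (hpZ.dvd_of_dvd_pow h'))
    · exact hwn (Int.natCast_dvd_natCast.mp h')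
  have hηdenN : ¬ p ∣ η.den := fun h => hηden (Int.natCast_dvd_natCast.mpr h)
  -- p divides the numerator of η
  have hηα : η = (α ^ (2 * k) - β) * α ^ n := by
    have hpow : α ^ m = α ^ (2 * k) * α ^ n := by
      rw [← zpow_natCast α m, ← zpow_natCast α n, ← zpow_add₀ hα0]
      congr 1
      omega
    rw [hηdef, hpow]
    ring
  have hpnum : (p : ℤ) ∣ η.num := by
    by_cases hδ : α ^ (2 * k) - β = 0
    · have : η = 0 := by rw [hηα, hδ, zero_mul]
      rw [this]
      exact dvd_zero _
    · have hval := hkk.resolve_left hδ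
      have hαn : α ^ n ≠ 0 := pow_ne_zero _ hα0
      have hη0 : η ≠ 0 := by rw [hηα]; exact mul_ne_zero hδ hαn
      have hvη : 1 ≤ padicValRat p η := by
        rw [hηα, padicValRat.mul hδ hαn, padicValRat.pow α, hvα, mul_zero, add_zero]
        exact hval
      rw [padicValRat_def] at hvη
      have hz : padicValNat p η.den = 0 := padicValNat.eq_zero_of_not_dvd hηdenN
      have h1' : 1 ≤ padicValInt p η.num := by omega
      have : p ∣ η.num.natAbs := by
        by_contra hc
        rw [show padicValInt p η.num = padicValNat p η.num.natAbs from rfl,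
          padicValNat.eq_zero_of_not_dvd hc] at h1'
        omega
      exact Int.natCast_dvd.mpr this
  -- reduce mod p
  have hmod : ((x : ZMod p)) ^ m * (w : ZMod p) * (y : ZMod p) ^ n =
      (u : ZMod p) * (x : ZMod p) ^ n * (y : ZMod p) ^ m := by
    have h2 : ((η.num : ℤ) : ZMod p) = 0 := by
      rw [ZMod.intCast_zmod_eq_zero_iff_dvd]
      exact_mod_cast hpnum
    have h3 := congrArg (Int.cast : ℤ → ZMod p) hZ
    push_cast at h3
    rw [h2, zero_mul] at h3
    have hden0 : ((η.den : ℕ) : ZMod p) ≠ 0 :=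
      fun h => hηdenN ((ZMod.natCast_eq_zero_iff _ _).mp h)
    have h4 : ((x : ZMod p) ^ m * (w : ZMod p) * (y : ZMod p) ^ n -
        (u : ZMod p) * (x : ZMod p) ^ n * (y : ZMod p) ^ m) = 0 := by
      rcases mul_eq_zero.mp h3.symm with h' | h'
      · exact h'
      · exact absurd h' hden0
    exact sub_eq_zero.mp h4
  -- residues of α and β
  have haQ : (α : ZMod p) = (x : ZMod p) / (y : ZMod p) := by
    rw [Rat.cast_def]
  have hbQ : (β : ZMod p) = (u : ZMod p) / (w : ZMod p) := by
    rw [Rat.cast_def]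
  have ha0 : (α : ZMod p) ≠ 0 := by
    rw [haQ]; exact div_ne_zero hx0 hy0
  have hb0 : (β : ZMod p) ≠ 0 := by
    rw [hbQ]; exact div_ne_zero hu0 hw0
  have hba : (β : ZMod p) * (α : ZMod p) ^ n = (α : ZMod p) ^ m := by
    rw [haQ, hbQ, div_pow, div_pow, div_mul_div_comm,
      div_eq_div_iff (mul_ne_zero hw0 (pow_ne_zero _ hy0)) (pow_ne_zero _ hy0)]
    linear_combination -hmod
  -- pass to the unit group
  set A : (ZMod p)ˣ := Units.mk0 _ ha0 with hAdef
  set B : (ZMod p)ˣ := Units.mk0 _ hb0 with hBdef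
  have hBA : B * A ^ n = A ^ m := by
    ext
    push_cast [hAdef, hBdef]
    exact hba
  have hBz : B = A ^ (2 * k) := by
    have h1 : B = A ^ m * (A ^ n)⁻¹ := eq_mul_inv_of_mul_eq hBA
    rw [h1, ← zpow_natCast A m, ← zpow_natCast A n, ← zpow_neg, ← zpow_add, ← hmn]
    congr 1
  -- identify ordRat with orders of units
  have hordα : ordRat p α = orderOf A := by
    have h1 : ratResidue p α = (α : ZMod p) := by
      rw [ratResidue, dif_pos hp]
    rw [ordRat, h1, hAdef]
    exact (orderOf_units (y := A)).symm ▸ rfl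
  have hordβ : ordRat p β = orderOf B := by
    have h1 : ratResidue p β = (β : ZMod p) := by
      rw [ratResidue, dif_pos hp]
    rw [ordRat, h1, hBdef]
    exact (orderOf_units (y := B)).symm ▸ rfl
  set d : ℕ := orderOf A with hddef
  have hd0 : 0 < d := orderOf_pos A
  -- d is even since α is a nonresidue
  have hlegα : quadraticChar (ZMod p) ((α : ZMod p)) = -1 := by
    rw [legendreRat, dif_pos hp, ratResidue, dif_pos hp] at hleg
    exact_mod_cast hleg
  have hdeven : Even d := by
    by_contra hodd
    rw [Nat.not_even_iff_odd] at hodd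
    have hns := quadraticChar_neg_one_iff_not_isSquare.mp hlegα
    apply hns
    refine ⟨(α : ZMod p) ^ ((d + 1) / 2), ?_⟩
    have h2 : (d + 1) / 2 + (d + 1) / 2 = d + 1 := by
      obtain ⟨c, hc⟩ := hodd
      omega
    have hdα : orderOf ((α : ZMod p)) = d := by
      rw [hddef]
      exact orderOf_units (y := A)
    have h3 : (α : ZMod p) ^ (d + 1) = (α : ZMod p) := by
      rw [pow_succ, ← hdα, pow_orderOf_eq_one, one_mul]
    rw [← pow_add, h2, h3]
  -- reduce the exponent mod d
  have hdZ : (d : ℤ) ≠ 0 := by exact_mod_cast hd0.ne'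
  set r : ℤ := (2 * k) % (d : ℤ) with hrdef
  have hrnn : 0 ≤ r := Int.emod_nonneg _ hdZ
  set s : ℕ := r.toNat with hsdef
  have hsr : (s : ℤ) = r := Int.toNat_of_nonneg hrnn
  have hBs : B = A ^ s := by
    rw [← zpow_natCast A s, hsr, hrdef, hddef, zpow_mod_orderOf]
    exact hBz
  have hseven : Even s := by
    have h1 : Even r := by
      rw [hrdef, Int.emod_def]
      have h2 : Even ((d : ℤ) * (2 * k / (d : ℤ))) :=
        (Int.even_coe_nat d |>.mpr hdeven).mul_right _
      have h3 : Even (2 * k) := even_two_mul k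
      exact h3.sub h2
    rw [← Int.even_coe_nat, hsr]
    exact h1
  set g : ℕ := Nat.gcd d s with hgdef
  have hgd : g ∣ d := Nat.gcd_dvd_left _ _
  have hg2 : 2 ∣ g := Nat.dvd_gcd hdeven.two_dvd hseven.two_dvd
  have hg0 : 0 < g := Nat.gcd_pos_of_pos_left _ hd0
  have horder : orderOf B = d / g := by
    by_cases hs0 : s = 0
    · rw [hBs, hs0, pow_zero, orderOf_one, hgdef, hs0, Nat.gcd_zero_right, Nat.div_self hd0]
    · rw [hBs, orderOf_pow' A hs0, hddef, hgdef]
  have hg1 : 1 < g := by omega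
  have hlt : d / g < d := Nat.div_lt_self hd0 hg1
  have hdecomp : d = g * (d / g) := (Nat.mul_div_cancel' hgd).symm
  refine ⟨?_, g, hg0, (even_iff_two_dvd).mpr hg2, ?_⟩
  · rw [hordα, hordβ, horder]
    exact hlt
  · rw [hordα, hordβ, horder]
    exact hdecomp
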